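/- Perturbation bound for elliptic bilinear forms: under the Lax–Milgram setting, if u_a and u_b solve ∫_D a∇u_a·∇v = F(v) and ∫_D b∇u_b·∇v = F(v) for all v ∈ V, with 0 < a₋ ≤ a, b a.e., and ∇u_a ∈ L^{2+j}(D) for some j > 0, then ‖u_a − u_b‖_V ≤ C(a₋, D) ‖a − b‖_{L^{2b'}(D)} ‖∇u_a‖_{L^{2n}(D)} where 1/b' + 1/n = 1 and n < 1 + j/2. -/

import Mathlib

open MeasureTheory

/-- Abstract model of a closed subspace `V ⊆ H¹(D)` with Poincaré inequality
(see the Lax–Milgram setting): embedding into `L²(D)`, gradient into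
`L²(D; ℝ^d)`, `H¹`-norm identity and Poincaré inequality. -/
structure SobolevSubspace (d : ℕ) (μ : Measure (EuclideanSpace ℝ (Fin d)))
    (V : Type*) [NormedAddCommGroup V] [InnerProductSpace ℝ V] [CompleteSpace V] where
  toL2 : V →L[ℝ] Lp ℝ 2 μ
  grad : V →L[ℝ] Lp (EuclideanSpace ℝ (Fin d)) 2 μ
  norm_eq : ∀ v : V, ‖v‖ ^ 2 = ‖toL2 v‖ ^ 2 + ‖grad v‖ ^ 2
  C_P : ℝ
  C_P_pos : 0 < C_P
  poincare : ∀ v : V, ‖v‖ ≤ C_P * ‖grad v‖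

set_option maxHeartbeats 1000000 in
/-- Perturbation bound for elliptic bilinear forms: if `u_a` and `u_b` solve
`∫_D a ∇u_a·∇v = F(v)` and `∫_D b ∇u_b·∇v = F(v)` for all `v ∈ V`, with
`0 < a₋ ≤ a, b` a.e. (and `a, b ∈ L^∞(D)`), and `∇u_a ∈ L^{2+j}(D)` for some
`j > 0`, then `‖u_a − u_b‖_V ≤ C(a₋, D) ‖a − b‖_{L^{2b'}(D)} ‖∇u_a‖_{L^{2n}(D)}`
where `1/b' + 1/n = 1` and `n < 1 + j/2`. -/
theorem elliptic_perturbation_bound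
    (d : ℕ) (D : Set (EuclideanSpace ℝ (Fin d)))
    (hDopen : IsOpen D) (hDbd : Bornology.IsBounded D) (hDne : D.Nonempty)
    (V : Type*) [NormedAddCommGroup V] [InnerProductSpace ℝ V] [CompleteSpace V]
    (S : SobolevSubspace d (volume.restrict D) V)
    (aLow : ℝ) (haLow : 0 < aLow)
    (j b' n : ℝ) (hj : 0 < j) (hb' : 1 < b') (hn : 1 < n)
    (hconj : 1 / b' + 1 / n = 1) (hn2 : n < 1 + j / 2) :
    ∃ C > 0, ∀ (a b : EuclideanSpace ℝ (Fin d) → ℝ) (aUp bUp : ℝ)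
      (F : V →L[ℝ] ℝ) (ua ub : V),
      Measurable a → Measurable b →
      (∀ᵐ x ∂(volume.restrict D), aLow ≤ a x ∧ a x ≤ aUp) →
      (∀ᵐ x ∂(volume.restrict D), aLow ≤ b x ∧ b x ≤ bUp) →
      (∀ v : V,
        ∫ x, a x * (inner ℝ (S.grad ua x) (S.grad v x) : ℝ) ∂(volume.restrict D) = F v) →
      (∀ v : V,
        ∫ x, b x * (inner ℝ (S.grad ub x) (S.grad v x) : ℝ) ∂(volume.restrict D) = F v) →
      MemLp (fun x => ‖S.grad ua x‖) (ENNReal.ofReal (2 + j)) (volume.restrict D) →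
      ‖ua - ub‖
        ≤ C * (∫ x, |a x - b x| ^ (2 * b') ∂(volume.restrict D)) ^ (1 / (2 * b'))
            * (∫ x, ‖S.grad ua x‖ ^ (2 * n) ∂(volume.restrict D)) ^ (1 / (2 * n)) := by
  refine ⟨S.C_P / aLow, div_pos S.C_P_pos haLow, ?_⟩
  intro a b aUp bUp F ua ub haMeas hbMeas haBd hbBd hwa hwb hMem
  haveI hfin : IsFiniteMeasure (volume.restrict D) := by
    constructor
    rw [Measure.restrict_apply_univ]
    exact hDbd.measure_lt_top
  set Ga := S.grad ua with hGa
  set Gb := S.grad ub with hGb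
  set w := ua - ub with hw
  set Gw := S.grad w with hGw
  have hGwsub : ∀ᵐ x ∂(volume.restrict D), Gw x = Ga x - Gb x := by
    have h1 : Gw = Ga - Gb := by rw [hGw, hGa, hGb, hw, map_sub]
    rw [h1]
    filter_upwards [Lp.coeFn_sub Ga Gb] with x hx
    simpa using hx
  have habs_ab : ∀ᵐ x ∂(volume.restrict D), |a x - b x| ≤ aUp + bUp := by
    filter_upwards [haBd, hbBd] with x hx1 hx2
    obtain ⟨h1, h2⟩ := hx1; obtain ⟨h3, h4⟩ := hx2
    have ha0 : 0 < a x := lt_of_lt_of_le haLow h1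
    have hb0 : 0 < b x := lt_of_lt_of_le haLow h3
    exact abs_le.mpr ⟨by linarith, by linarith⟩
  have haSM : AEStronglyMeasurable a (volume.restrict D) := haMeas.aestronglyMeasurable
  have hbSM : AEStronglyMeasurable b (volume.restrict D) := hbMeas.aestronglyMeasurable
  have hanorm : ∀ᵐ x ∂(volume.restrict D), ‖a x‖ ≤ aUp := by
    filter_upwards [haBd] with x hx
    rw [Real.norm_eq_abs, abs_of_pos (lt_of_lt_of_le haLow hx.1)]; exact hx.2
  have hbnorm : ∀ᵐ x ∂(volume.restrict D), ‖b x‖ ≤ bUp := by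
    filter_upwards [hbBd] with x hx
    rw [Real.norm_eq_abs, abs_of_pos (lt_of_lt_of_le haLow hx.1)]; exact hx.2
  have hIGaGw : Integrable (fun x => (inner ℝ (Ga x) (Gw x) : ℝ)) (volume.restrict D) :=
    L2.integrable_inner (𝕜 := ℝ) Ga Gw
  have hIGbGw : Integrable (fun x => (inner ℝ (Gb x) (Gw x) : ℝ)) (volume.restrict D) :=
    L2.integrable_inner (𝕜 := ℝ) Gb Gw
  have hIGwGw : Integrable (fun x => (inner ℝ (Gw x) (Gw x) : ℝ)) (volume.restrict D) :=
    L2.integrable_inner (𝕜 := ℝ) Gw Gw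
  have hI_b_GaGw : Integrable (fun x => b x * (inner ℝ (Ga x) (Gw x) : ℝ)) (volume.restrict D) :=
    hIGaGw.bdd_mul hbSM hbnorm
  have hI_b_GbGw : Integrable (fun x => b x * (inner ℝ (Gb x) (Gw x) : ℝ)) (volume.restrict D) :=
    hIGbGw.bdd_mul hbSM hbnorm
  have hI_a_GaGw : Integrable (fun x => a x * (inner ℝ (Ga x) (Gw x) : ℝ)) (volume.restrict D) :=
    hIGaGw.bdd_mul haSM hanorm
  have hI_b_GwGw : Integrable (fun x => b x * (inner ℝ (Gw x) (Gw x) : ℝ)) (volume.restrict D) :=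
    hIGwGw.bdd_mul hbSM hbnorm
  have e1 : ∫ x, a x * (inner ℝ (Ga x) (Gw x) : ℝ) ∂(volume.restrict D) = F w := by
    have h := hwa w
    rw [← hGw] at h
    exact h
  have e2 : ∫ x, b x * (inner ℝ (Gb x) (Gw x) : ℝ) ∂(volume.restrict D) = F w := by
    have h := hwb w
    rw [← hGw] at h
    exact h
  have esplit : ∫ x, b x * (inner ℝ (Gw x) (Gw x) : ℝ) ∂(volume.restrict D)
      = (∫ x, b x * (inner ℝ (Ga x) (Gw x) : ℝ) ∂(volume.restrict D))
        - ∫ x, b x * (inner ℝ (Gb x) (Gw x) : ℝ) ∂(volume.restrict D) := by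
    rw [← integral_sub hI_b_GaGw hI_b_GbGw]
    refine integral_congr_ae ?_
    filter_upwards [hGwsub] with x hx
    rw [hx, inner_sub_left]; ring
  have e3 : (∫ x, b x * (inner ℝ (Ga x) (Gw x) : ℝ) ∂(volume.restrict D))
        - ∫ x, a x * (inner ℝ (Ga x) (Gw x) : ℝ) ∂(volume.restrict D)
      = ∫ x, (b x - a x) * (inner ℝ (Ga x) (Gw x) : ℝ) ∂(volume.restrict D) := by
    rw [← integral_sub hI_b_GaGw hI_a_GaGw]
    refine integral_congr_ae (Filter.Eventually.of_forall fun x => ?_)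
    ring
  have key : ∫ x, b x * (inner ℝ (Gw x) (Gw x) : ℝ) ∂(volume.restrict D)
      = ∫ x, (b x - a x) * (inner ℝ (Ga x) (Gw x) : ℝ) ∂(volume.restrict D) := by
    rw [esplit, e2, ← e1]; exact e3
  have hInnSq : ∀ x, (inner ℝ (Gw x) (Gw x) : ℝ) = ‖Gw x‖ ^ 2 :=
    fun x => real_inner_self_eq_norm_sq _
  have hIsq : Integrable (fun x => ‖Gw x‖ ^ 2) (volume.restrict D) :=
    hIGwGw.congr (Filter.Eventually.of_forall fun x => hInnSq x)
  have hlow : aLow * ∫ x, ‖Gw x‖ ^ 2 ∂(volume.restrict D) ≤ ∫ x, b x * (inner ℝ (Gw x) (Gw x) : ℝ) ∂(volume.restrict D) := by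
    rw [← integral_const_mul]
    refine integral_mono_ae (hIsq.const_mul aLow) hI_b_GwGw ?_
    filter_upwards [hbBd] with x hx
    rw [hInnSq x]
    exact mul_le_mul_of_nonneg_right hx.1 (sq_nonneg _)
  have hGa2plusj : MemLp (fun x => ‖Ga x‖) (ENNReal.ofReal (2 + j)) (volume.restrict D) := hMem
  have hGa2 : MemLp (fun x => ‖Ga x‖) (ENNReal.ofReal 2) (volume.restrict D) :=
    hGa2plusj.mono_exponent (ENNReal.ofReal_le_ofReal (by linarith))
  have hGa2n : MemLp (fun x => ‖Ga x‖) (ENNReal.ofReal (2 * n)) (volume.restrict D) :=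
    hGa2plusj.mono_exponent (ENNReal.ofReal_le_ofReal (by linarith))
  have hGw2 : MemLp (fun x => ‖Gw x‖) (ENNReal.ofReal 2) (volume.restrict D) := by
    have h2 : ENNReal.ofReal 2 = (2 : ENNReal) := by norm_num
    rw [h2]; exact (Lp.memLp Gw).norm
  have hf2 : MemLp (fun x => |a x - b x| * ‖Ga x‖) (ENNReal.ofReal 2) (volume.restrict D) := by
    refine hGa2.of_le_mul (c := aUp + bUp) ((haSM.sub hbSM).norm.mul hGa2plusj.1) ?_
    filter_upwards [habs_ab] with x hx
    rw [Real.norm_eq_abs, abs_mul, abs_abs, abs_norm, norm_norm]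
    exact mul_le_mul_of_nonneg_right hx (norm_nonneg _)
  have hIfg2 : Integrable (fun x => ‖Ga x‖ * ‖Gw x‖) (volume.restrict D) := by
    have hpqr : (1 : ENNReal)/1 = 1/(ENNReal.ofReal 2) + 1/(ENNReal.ofReal 2) := by
      rw [ENNReal.ofReal_ofNat, ENNReal.div_add_div_same]
      norm_num [ENNReal.div_self]
    haveI : ENNReal.HolderTriple (ENNReal.ofReal 2) (ENNReal.ofReal 2) 1 :=
      ⟨by rw [ENNReal.ofReal_ofNat, ENNReal.inv_two_add_inv_two, inv_one]⟩
    have h := (hGw2.smul (𝕜 := ℝ) hGa2 : MemLp _ 1 (volume.restrict D))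
    rw [memLp_one_iff_integrable] at h
    exact h.congr (Filter.Eventually.of_forall fun x => by
      simp [smul_eq_mul])
  have hIfg : Integrable (fun x => |a x - b x| * ‖Ga x‖ * ‖Gw x‖) (volume.restrict D) := by
    have h := hIfg2.bdd_mul (f := fun x => ‖a x - b x‖)
      ((haSM.sub hbSM).norm) (c := aUp + bUp) ?_
    · refine h.congr (Filter.Eventually.of_forall fun x => ?_)
      simp [Real.norm_eq_abs, mul_assoc]
    · filter_upwards [habs_ab] with x hx
      rwa [norm_norm, Real.norm_eq_abs]
  have hI_ba_GaGw : Integrable (fun x => (b x - a x) * (inner ℝ (Ga x) (Gw x) : ℝ)) (volume.restrict D) := by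
    refine hIGaGw.bdd_mul (hbSM.sub haSM) (c := aUp + bUp) ?_
    filter_upwards [habs_ab] with x hx
    rwa [Real.norm_eq_abs, abs_sub_comm]
  have hup : ∫ x, (b x - a x) * (inner ℝ (Ga x) (Gw x) : ℝ) ∂(volume.restrict D)
      ≤ ∫ x, |a x - b x| * ‖Ga x‖ * ‖Gw x‖ ∂(volume.restrict D) := by
    refine integral_mono_ae hI_ba_GaGw hIfg (Filter.Eventually.of_forall fun x => ?_)
    calc (b x - a x) * (inner ℝ (Ga x) (Gw x) : ℝ)
        ≤ |(b x - a x) * (inner ℝ (Ga x) (Gw x) : ℝ)| := le_abs_self _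
      _ = |a x - b x| * |(inner ℝ (Ga x) (Gw x) : ℝ)| := by rw [abs_mul, abs_sub_comm]
      _ ≤ |a x - b x| * (‖Ga x‖ * ‖Gw x‖) :=
          mul_le_mul_of_nonneg_left (abs_real_inner_le_norm _ _) (abs_nonneg _)
      _ = |a x - b x| * ‖Ga x‖ * ‖Gw x‖ := (mul_assoc _ _ _).symm
  have hCS : ∫ x, |a x - b x| * ‖Ga x‖ * ‖Gw x‖ ∂(volume.restrict D)
      ≤ (∫ x, (|a x - b x| * ‖Ga x‖) ^ (2:ℝ) ∂(volume.restrict D)) ^ ((1:ℝ)/2)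
        * (∫ x, ‖Gw x‖ ^ (2:ℝ) ∂(volume.restrict D)) ^ ((1:ℝ)/2) := by
    have h := integral_mul_norm_le_Lp_mul_Lq (μ := volume.restrict D)
      (Real.holderConjugate_iff.mpr ⟨one_lt_two, by norm_num⟩ : Real.HolderConjugate 2 2) hf2 hGw2
    simpa [Real.norm_eq_abs, abs_mul, abs_abs, abs_norm, norm_norm] using h
  have hconjR : Real.HolderConjugate b' n := Real.holderConjugate_iff.mpr ⟨hb', by simpa [one_div] using hconj⟩
  have hf_b' : MemLp (fun x => |a x - b x| ^ (2:ℝ)) (ENNReal.ofReal b') (volume.restrict D) := by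
    refine MemLp.of_bound (μ := volume.restrict D) ?_ ((aUp + bUp) ^ (2:ℝ)) ?_
    · exact (((haSM.sub hbSM).norm.aemeasurable.pow_const (2:ℝ)).aestronglyMeasurable).congr
        (Filter.Eventually.of_forall fun x => by simp [Real.norm_eq_abs])
    · filter_upwards [habs_ab] with x hx
      rw [Real.norm_eq_abs, abs_of_nonneg (Real.rpow_nonneg (abs_nonneg _) _)]
      exact Real.rpow_le_rpow (abs_nonneg _) hx (by norm_num)
  have hg_n : MemLp (fun x => ‖Ga x‖ ^ (2:ℝ)) (ENNReal.ofReal n) (volume.restrict D) := by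
    have h := hGa2n.norm_rpow_div (ENNReal.ofReal 2)
    have he : ENNReal.ofReal (2 * n) / ENNReal.ofReal 2 = ENNReal.ofReal n := by
      rw [← ENNReal.ofReal_div_of_pos (by norm_num)]
      norm_num [mul_comm, mul_div_assoc]
    rw [he] at h
    refine MemLp.ae_eq (Filter.Eventually.of_forall fun x => ?_) h
    beta_reduce
    rw [norm_norm, ENNReal.toReal_ofReal (by norm_num : (0:ℝ) ≤ 2)]
  have hHolder2 : ∫ x, (|a x - b x| * ‖Ga x‖) ^ (2:ℝ) ∂(volume.restrict D)
      ≤ (∫ x, |a x - b x| ^ (2 * b') ∂(volume.restrict D)) ^ (1/b')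
        * (∫ x, ‖Ga x‖ ^ (2 * n) ∂(volume.restrict D)) ^ (1/n) := by
    have h := integral_mul_norm_le_Lp_mul_Lq (μ := volume.restrict D) hconjR hf_b' hg_n
    have eL : ∫ x, ‖|a x - b x| ^ (2:ℝ)‖ * ‖‖Ga x‖ ^ (2:ℝ)‖ ∂(volume.restrict D)
        = ∫ x, (|a x - b x| * ‖Ga x‖) ^ (2:ℝ) ∂(volume.restrict D) := by
      refine integral_congr_ae (Filter.Eventually.of_forall fun x => ?_)
      beta_reduce
      rw [Real.norm_eq_abs, Real.norm_eq_abs,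
        abs_of_nonneg (Real.rpow_nonneg (abs_nonneg _) _),
        abs_of_nonneg (Real.rpow_nonneg (norm_nonneg _) _),
        ← Real.mul_rpow (abs_nonneg _) (norm_nonneg _)]
    have eA : ∫ x, ‖|a x - b x| ^ (2:ℝ)‖ ^ b' ∂(volume.restrict D) = ∫ x, |a x - b x| ^ (2 * b') ∂(volume.restrict D) := by
      refine integral_congr_ae (Filter.Eventually.of_forall fun x => ?_)
      beta_reduce
      rw [Real.norm_eq_abs, abs_of_nonneg (Real.rpow_nonneg (abs_nonneg _) _),
        ← Real.rpow_mul (abs_nonneg _)]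
    have eB : ∫ x, ‖‖Ga x‖ ^ (2:ℝ)‖ ^ n ∂(volume.restrict D) = ∫ x, ‖Ga x‖ ^ (2 * n) ∂(volume.restrict D) := by
      refine integral_congr_ae (Filter.Eventually.of_forall fun x => ?_)
      beta_reduce
      rw [Real.norm_eq_abs, abs_of_nonneg (Real.rpow_nonneg (norm_nonneg _) _),
        ← Real.rpow_mul (norm_nonneg _)]
    rw [eL, eA, eB] at h
    exact h
  have hJeq : ∫ x, ‖Gw x‖ ^ (2:ℝ) ∂(volume.restrict D) = ∫ x, ‖Gw x‖ ^ 2 ∂(volume.restrict D) := by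
    refine integral_congr_ae (Filter.Eventually.of_forall fun x => ?_)
    beta_reduce
    rw [show ((2:ℝ)) = ((2:ℕ):ℝ) by norm_num, Real.rpow_natCast]
  set J := ∫ x, ‖Gw x‖ ^ 2 ∂(volume.restrict D) with hJdef
  have hJ0 : 0 ≤ J := integral_nonneg fun x => sq_nonneg _
  set A := ∫ x, |a x - b x| ^ (2 * b') ∂(volume.restrict D) with hAdef
  set B := ∫ x, ‖Ga x‖ ^ (2 * n) ∂(volume.restrict D) with hBdef
  have hA0 : 0 ≤ A := integral_nonneg fun x => Real.rpow_nonneg (abs_nonneg _) _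
  have hB0 : 0 ≤ B := integral_nonneg fun x => Real.rpow_nonneg (norm_nonneg _) _
  set K := A ^ (1/(2*b')) * B ^ (1/(2*n)) with hKdef
  have hK0 : 0 ≤ K := mul_nonneg (Real.rpow_nonneg hA0 _) (Real.rpow_nonneg hB0 _)
  have hKeq : (A ^ (1/b') * B ^ (1/n)) ^ ((1:ℝ)/2) = K := by
    rw [Real.mul_rpow (Real.rpow_nonneg hA0 _) (Real.rpow_nonneg hB0 _),
      ← Real.rpow_mul hA0, ← Real.rpow_mul hB0,
      show (1/b') * ((1:ℝ)/2) = 1/(2*b') by ring,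
      show (1/n) * ((1:ℝ)/2) = 1/(2*n) by ring, hKdef]
  set s := Real.sqrt J with hsdef
  have hs0 : 0 ≤ s := Real.sqrt_nonneg _
  have hs_rpow : s = J ^ ((1:ℝ)/2) := Real.sqrt_eq_rpow J
  have hs_sq : s ^ 2 = J := Real.sq_sqrt hJ0
  have main : aLow * J ≤ K * s := by
    calc aLow * J ≤ ∫ x, b x * (inner ℝ (Gw x) (Gw x) : ℝ) ∂(volume.restrict D) := hlow
      _ = ∫ x, (b x - a x) * (inner ℝ (Ga x) (Gw x) : ℝ) ∂(volume.restrict D) := key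
      _ ≤ ∫ x, |a x - b x| * ‖Ga x‖ * ‖Gw x‖ ∂(volume.restrict D) := hup
      _ ≤ (∫ x, (|a x - b x| * ‖Ga x‖) ^ (2:ℝ) ∂(volume.restrict D)) ^ ((1:ℝ)/2)
          * (∫ x, ‖Gw x‖ ^ (2:ℝ) ∂(volume.restrict D)) ^ ((1:ℝ)/2) := hCS
      _ ≤ (A ^ (1/b') * B ^ (1/n)) ^ ((1:ℝ)/2)
          * (∫ x, ‖Gw x‖ ^ (2:ℝ) ∂(volume.restrict D)) ^ ((1:ℝ)/2) := by
          refine mul_le_mul_of_nonneg_right ?_ (Real.rpow_nonneg ?_ _)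
          · exact Real.rpow_le_rpow (integral_nonneg fun x =>
              Real.rpow_nonneg (mul_nonneg (abs_nonneg _) (norm_nonneg _)) _)
              hHolder2 (by norm_num)
          · rw [hJeq]; exact hJ0
      _ = K * s := by rw [hKeq, hJeq, ← hs_rpow]
  have hs_le : s ≤ K / aLow := by
    rcases eq_or_lt_of_le hs0 with h0 | hpos
    · rw [← h0]; exact div_nonneg hK0 haLow.le
    · have h1 : aLow * (s * s) ≤ K * s := by
        have hss : s * s = J := by nlinarith [hs_sq]
        rw [hss]; exact main
      have h2 : aLow * s ≤ K := by nlinarith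
      rw [le_div_iff₀ haLow]
      linarith
  have hGwnorm : ‖Gw‖ = s := by
    have h1 : ‖Gw‖ ^ 2 = J := by
      rw [← real_inner_self_eq_norm_sq, L2.inner_def, hJdef]
      exact integral_congr_ae (Filter.Eventually.of_forall fun x => hInnSq x)
    rw [hsdef, ← h1, Real.sqrt_sq (norm_nonneg _)]
  have hP : ‖w‖ ≤ S.C_P * ‖Gw‖ := by
    have h := S.poincare w
    rwa [← hGw] at h
  calc ‖w‖ ≤ S.C_P * ‖Gw‖ := hP
    _ = S.C_P * s := by rw [hGwnorm]
    _ ≤ S.C_P * (K / aLow) := mul_le_mul_of_nonneg_left hs_le S.C_P_pos.le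
    _ = S.C_P / aLow * A ^ (1/(2*b')) * B ^ (1/(2*n)) := by rw [hKdef]; ring
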